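/- Let A be an invertible operator associated with a bounded coercive sesquilinear form a on V ↪ H, with coercivity constant δ. Then for λ in a sector of resolvent boundedness (i.e. ‖(λI−A)⁻¹‖ ≤ C/|λ| and ‖A(λI−A)⁻¹‖ ≤ C'), one has ‖(λI−A)⁻¹‖_{L(D(A), V)} ≤ C''/|λ|, where D(A) carries the graph norm; in particular δ‖(λI−A)⁻¹f‖_V² ≤ ‖(λI−A)⁻¹Af‖·‖(λI−A)⁻¹f‖ for f ∈ D(A). -/

import Mathlib

noncomputable section

/-- Let `A` be an invertible operator associated with a bounded coercive
sesquilinear form `a` on `V ↪ H` with coercivity constant `δa`.  For `λ` in a sector of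
resolvent boundedness, i.e. `‖(λI−A)⁻¹‖ ≤ C/|λ|` and `‖A(λI−A)⁻¹‖ ≤ C'`, one has
`‖(λI−A)⁻¹‖_{L(D(A),V)} ≤ C''/|λ|` (graph norm on `D(A)`); in particular
`δa‖(λI−A)⁻¹f‖_V² ≤ ‖(λI−A)⁻¹Af‖·‖(λI−A)⁻¹f‖` for `f ∈ D(A)`.
(`f ∈ D(A)` with `Af = hf` is encoded by `∀ φ, a(vf,φ) = (hf, ιφ)`, `ι vf = f`; the
`V`-valued representative of `(λI−A)⁻¹ f` is `w` with `ι w = R f`.) -/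
theorem resolvent_graph_norm_estimate
    {H V : Type*}
    [NormedAddCommGroup H] [InnerProductSpace ℂ H] [CompleteSpace H]
    [NormedAddCommGroup V] [InnerProductSpace ℂ V] [CompleteSpace V]
    (ι : V →L[ℂ] H) (hι : Function.Injective ι) (hdense : DenseRange ι)
    (a : V → V → ℂ) (M δa : ℝ) (hδa : 0 < δa)
    (hM : ∀ u v : V, ‖a u v‖ ≤ M * ‖u‖ * ‖v‖)
    (hcoer : ∀ u : V, δa * ‖u‖ ^ 2 ≤ (a u u).re)
    (lam : ℂ) (hlam : lam ≠ 0) (C C' : ℝ) (hC : 0 < C) (hC' : 0 < C')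
    (R : H →L[ℂ] H)
    (hR : ‖R‖ ≤ C / ‖lam‖)
    (hRinv : ∀ (v : V) (h : H), (∀ φ : V, a v φ = (inner ℂ (ι φ) h : ℂ)) →
      R (lam • ι v - h) = ι v)
    (hRsurj : ∀ y : H, ∃ (v : V) (h : H), (∀ φ : V, a v φ = (inner ℂ (ι φ) h : ℂ)) ∧
      ι v = R y ∧ lam • ι v - h = y)
    (hAR : ∀ (y : H) (v : V) (h : H), (∀ φ : V, a v φ = (inner ℂ (ι φ) h : ℂ)) →
      ι v = R y → lam • ι v - h = y → ‖h‖ ≤ C' * ‖y‖) :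
    ∃ C'' > 0, ∀ (vf : V) (hf : H), (∀ φ : V, a vf φ = (inner ℂ (ι φ) hf : ℂ)) →
      ∀ w : V, ι w = R (ι vf) →
        δa * ‖w‖ ^ 2 ≤ ‖R hf‖ * ‖R (ι vf)‖ ∧
        ‖w‖ ≤ C'' / ‖lam‖ * (‖ι vf‖ + ‖hf‖) := by
  refine ⟨(C + 1) / Real.sqrt δa, by positivity, ?_⟩
  intro vf hf hvf w hw
  obtain ⟨v, h, hav, hRv, heq⟩ := hRsurj (ι vf)
  have hwv : w = v := hι (by rw [hw, hRv])
  subst hwv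
  have h1 : lam • R (ι vf) - R hf = ι vf := by
    have := hRinv vf hf hvf
    simpa [map_sub, map_smul] using this
  have hRhf : R hf = h := by
    have e1 : R hf = lam • R (ι vf) - ι vf := by
      nth_rewrite 2 [← h1]
      rw [sub_sub_cancel]
    have e2 : h = lam • ι w - ι vf := by rw [← heq, sub_sub_cancel]
    rw [e1, e2, hRv]
  set L := ‖lam‖ with hLdef
  have hL : 0 < L := by
    simpa [hLdef] using (norm_pos_iff.mpr hlam)
  have first : δa * ‖w‖ ^ 2 ≤ ‖R hf‖ * ‖R (ι vf)‖ := by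
    calc δa * ‖w‖ ^ 2 ≤ (a w w).re := hcoer w
      _ = (inner ℂ (ι w) h : ℂ).re := by rw [hav w]
      _ ≤ ‖(inner ℂ (ι w) h : ℂ)‖ := Complex.re_le_norm _
      _ ≤ ‖ι w‖ * ‖h‖ := by
          simpa using
            norm_inner_le_norm (𝕜 := ℂ) (ι w) h
      _ = ‖R hf‖ * ‖R (ι vf)‖ := by rw [hRv, hRhf, mul_comm]
  refine ⟨first, ?_⟩
  have hb1 : ‖R hf‖ ≤ C / L * ‖hf‖ :=
    (R.le_opNorm hf).trans (mul_le_mul_of_nonneg_right hR (norm_nonneg _))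
  have hb2 : ‖R (ι vf)‖ ≤ C / L * ‖ι vf‖ :=
    (R.le_opNorm (ι vf)).trans (mul_le_mul_of_nonneg_right hR (norm_nonneg _))
  have h2 : δa * ‖w‖ ^ 2 ≤ (C / L * ‖hf‖) * (C / L * ‖ι vf‖) :=
    first.trans (mul_le_mul hb1 hb2 (norm_nonneg _) (by positivity))
  set s := Real.sqrt δa with hsdef
  have hs : 0 < s := Real.sqrt_pos.mpr hδa
  have hssq : s ^ 2 = δa := Real.sq_sqrt hδa.le
  set S := ‖ι vf‖ + ‖hf‖ with hSdef
  have hS : 0 ≤ S := by positivity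
  have key : (‖w‖ * (s * L)) ^ 2 ≤ ((C + 1) * S) ^ 2 := by
    have h3 : δa * ‖w‖ ^ 2 * L ^ 2 ≤ C ^ 2 * (‖hf‖ * ‖ι vf‖) := by
      have := mul_le_mul_of_nonneg_right h2 (sq_nonneg L)
      calc δa * ‖w‖ ^ 2 * L ^ 2 ≤ (C / L * ‖hf‖) * (C / L * ‖ι vf‖) * L ^ 2 := this
        _ = C ^ 2 * (‖hf‖ * ‖ι vf‖) := by field_simp
    have h4 : C ^ 2 * (‖hf‖ * ‖ι vf‖) ≤ ((C + 1) * S) ^ 2 := by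
      have ha := norm_nonneg hf
      have hb := norm_nonneg (ι vf)
      have hab : ‖hf‖ * ‖ι vf‖ ≤ S ^ 2 := by
        rw [hSdef]; nlinarith [sq_nonneg ‖hf‖, sq_nonneg ‖ι vf‖, mul_nonneg ha hb]
      have hCC : C ^ 2 ≤ (C + 1) ^ 2 := by nlinarith
      calc C ^ 2 * (‖hf‖ * ‖ι vf‖) ≤ (C + 1) ^ 2 * S ^ 2 :=
            mul_le_mul hCC hab (mul_nonneg ha hb) (sq_nonneg _)
        _ = ((C + 1) * S) ^ 2 := by ring
    calc (‖w‖ * (s * L)) ^ 2 = δa * ‖w‖ ^ 2 * L ^ 2 := by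
          rw [← hssq]; ring
      _ ≤ ((C + 1) * S) ^ 2 := h3.trans h4
  have key2 : ‖w‖ * (s * L) ≤ (C + 1) * S := by
    have h5 : 0 ≤ ‖w‖ * (s * L) := by positivity
    have h6 : 0 ≤ (C + 1) * S := by positivity
    calc ‖w‖ * (s * L) = Real.sqrt ((‖w‖ * (s * L)) ^ 2) := (Real.sqrt_sq h5).symm
      _ ≤ Real.sqrt (((C + 1) * S) ^ 2) := Real.sqrt_le_sqrt key
      _ = (C + 1) * S := Real.sqrt_sq h6
  have hsL : 0 < s * L := mul_pos hs hL
  have : ‖w‖ ≤ (C + 1) * S / (s * L) := (le_div_iff₀ hsL).mpr key2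
  calc ‖w‖ ≤ (C + 1) * S / (s * L) := this
    _ = (C + 1) / s / L * S := by field_simp
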